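/- The max-plus permanent of the adjacency matrix of a simple graph G equals the maximum cardinality of a subset S of the vertex set for which there exists a bijection φ: S → S (equivalently, an injection φ: S → V) with (v, φ(v)) an edge of G for all v ∈ S. More precisely: if t is the maximum size of a set of pairs (i_1,j_1),...,(i_t,j_t) with the i_k distinct, the j_k distinct, and each (i_k,j_k) an edge of G, then there exists such a maximum family with {i_1,...,i_t} = {j_1,...,j_t}. -/

import Mathlib

/-- The max-plus permanent of the adjacency matrix of `G`. -/
def mpPerm (N : ℕ) (G : SimpleGraph (Fin N)) [DecidableRel G.Adj] : ℕ :=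
  Finset.univ.sup fun π : Equiv.Perm (Fin N) =>
    ∑ i, if G.Adj i (π i) then 1 else 0

/-- `P` is a term: a set of pairs which are all edges of `G`, with pairwise
distinct first coordinates and pairwise distinct second coordinates. -/
def IsTerm (N : ℕ) (G : SimpleGraph (Fin N)) (P : Finset (Fin N × Fin N)) : Prop :=
  (∀ p ∈ P, G.Adj p.1 p.2) ∧
    (P.image Prod.fst).card = P.card ∧ (P.image Prod.snd).card = P.card

namespace MPAux

variable {N : ℕ} {G : SimpleGraph (Fin N)}

lemma injOn_fst {P : Finset (Fin N × Fin N)} (h : IsTerm N G P) :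
    Set.InjOn Prod.fst (P : Set (Fin N × Fin N)) := Finset.card_image_iff.mp h.2.1

lemma injOn_snd {P : Finset (Fin N × Fin N)} (h : IsTerm N G P) :
    Set.InjOn Prod.snd (P : Set (Fin N × Fin N)) := Finset.card_image_iff.mp h.2.2

lemma isTerm_of_subset {P Q : Finset (Fin N × Fin N)} (h : IsTerm N G Q) (hs : P ⊆ Q) :
    IsTerm N G P :=
  ⟨fun p hp => h.1 p (hs hp),
   Finset.card_image_iff.mpr ((injOn_fst h).mono (Finset.coe_subset.mpr hs)),
   Finset.card_image_iff.mpr ((injOn_snd h).mono (Finset.coe_subset.mpr hs))⟩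

lemma exists_perm {P : Finset (Fin N × Fin N)} (h : IsTerm N G P) :
    ∃ π : Equiv.Perm (Fin N), ∀ p ∈ P, π p.1 = p.2 := by
  classical
  revert h
  induction P using Finset.induction_on with
  | empty => exact fun _ => ⟨1, by simp⟩
  | @insert a s ha ih =>
    intro h
    obtain ⟨π, hπ⟩ := ih (isTerm_of_subset h (Finset.subset_insert _ _))
    refine ⟨π.trans (Equiv.swap a.2 (π a.1)), ?_⟩
    intro p hp
    rcases Finset.mem_insert.mp hp with rfl | hps
    · simp [Equiv.swap_apply_right]
    · have hpa : p ≠ a := fun hh => ha (hh ▸ hps)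
      have h1 : p.2 ≠ a.2 := fun hh =>
        hpa (injOn_snd h (by simp [hps]) (by simp) hh)
      have h2 : p.2 ≠ π a.1 := by
        intro hh
        have : π p.1 = π a.1 := by rw [hπ p hps, hh]
        have h11 : p.1 = a.1 := π.injective this
        exact hpa (injOn_fst h (by simp [hps]) (by simp) h11)
      simp [hπ p hps, Equiv.swap_apply_of_ne_of_ne h1 h2]

lemma sum_eq_card [DecidableRel G.Adj] (π : Equiv.Perm (Fin N)) :
    (∑ i, if G.Adj i (π i) then 1 else 0) =
      (Finset.univ.filter fun i => G.Adj i (π i)).card := by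
  rw [Finset.card_filter]

lemma mpPerm_le [DecidableRel G.Adj] {t : ℕ}
    (ht2 : ∀ Q : Finset (Fin N × Fin N), IsTerm N G Q → Q.card ≤ t) :
    mpPerm N G ≤ t := by
  apply Finset.sup_le
  intro π _
  rw [sum_eq_card]
  set s := Finset.univ.filter fun i => G.Adj i (π i) with hs
  have hinj : Set.InjOn (fun i => (i, π i)) (s : Set (Fin N)) := by
    intro a _ b _ hab
    exact congrArg Prod.fst hab
  have hcard : (s.image fun i => (i, π i)).card = s.card :=
    Finset.card_image_of_injOn hinj
  have hterm : IsTerm N G (s.image fun i => (i, π i)) := by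
    refine ⟨?_, ?_, ?_⟩
    · intro p hp
      obtain ⟨i, hi, rfl⟩ := Finset.mem_image.mp hp
      exact (Finset.mem_filter.mp hi).2
    · rw [Finset.image_image, hcard]
      have : ((fun i => (i, π i)) · |>.fst) = id := rfl
      rw [Finset.card_image_of_injOn]
      intro a _ b _ hab; exact hab
    · rw [Finset.image_image, hcard]
      rw [Finset.card_image_of_injOn]
      intro a _ b _ hab; exact π.injective hab
  calc s.card = (s.image fun i => (i, π i)).card := hcard.symm
    _ ≤ t := ht2 _ hterm

lemma le_mpPerm [DecidableRel G.Adj] {P : Finset (Fin N × Fin N)} (hP : IsTerm N G P) :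
    P.card ≤ mpPerm N G := by
  obtain ⟨π, hπ⟩ := exists_perm hP
  have h1 : P.card ≤ (Finset.univ.filter fun i => G.Adj i (π i)).card := by
    rw [← hP.2.1]
    apply Finset.card_le_card
    intro i hi
    obtain ⟨p, hp, rfl⟩ := Finset.mem_image.mp hi
    simp only [Finset.mem_filter, Finset.mem_univ, true_and]
    rw [hπ p hp]
    exact hP.1 p hp
  calc P.card ≤ _ := h1
    _ = ∑ i, if G.Adj i (π i) then 1 else 0 := (sum_eq_card π).symm
    _ ≤ mpPerm N G := Finset.le_sup (f := fun π : Equiv.Perm (Fin N) => ∑ i, if G.Adj i (π i) then 1 else 0) (Finset.mem_univ π)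

lemma image_sdiff_of_injOn {α β : Type*} [DecidableEq α] [DecidableEq β] {f : α → β}
    {s t : Finset α} (hf : Set.InjOn f (s : Set α)) (hts : t ⊆ s) :
    (s \ t).image f = s.image f \ t.image f := by
  ext y
  simp only [Finset.mem_image, Finset.mem_sdiff]
  constructor
  · rintro ⟨a, ⟨has, hat⟩, rfl⟩
    refine ⟨⟨a, has, rfl⟩, ?_⟩
    rintro ⟨b, hbt, hbe⟩
    exact hat (hf (hts hbt) has hbe ▸ hbt)
  · rintro ⟨⟨a, has, rfl⟩, hnt⟩
    exact ⟨a, ⟨has, fun hat => hnt ⟨a, hat, rfl⟩⟩, rfl⟩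

lemma chain_step {t : ℕ}
    (ht2 : ∀ Q : Finset (Fin N × Fin N), IsTerm N G Q → Q.card ≤ t)
    {P : Finset (Fin N × Fin N)} (hP : IsTerm N G P) (hPc : P.card = t)
    {i0 : Fin N} (hi0 : i0 ∈ P.image Prod.fst \ P.image Prod.snd) :
    ∃ Q : Finset (Fin N × Fin N), IsTerm N G Q ∧ Q.card = t ∧
      (Q.image Prod.fst \ Q.image Prod.snd).card <
        (P.image Prod.fst \ P.image Prod.snd).card := by
  classical
  set I := P.image Prod.fst with hI
  set J := P.image Prod.snd with hJ
  obtain ⟨hi0I, hi0J⟩ := Finset.mem_sdiff.mp hi0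
  obtain ⟨π, hπ⟩ := exists_perm hP
  set x : ℕ → Fin N := fun n => (π ^ n) i0 with hx
  have hx0 : x 0 = i0 := by simp [hx]
  have hxs : ∀ n, x (n + 1) = π (x n) := by
    intro n
    simp only [hx, pow_succ', Equiv.Perm.mul_apply]
  have hstep : ∀ n, x n ∈ I → (x n, x (n + 1)) ∈ P := by
    intro n hn
    obtain ⟨p, hp, hp1⟩ := Finset.mem_image.mp hn
    have h2 : p.2 = x (n + 1) := by rw [hxs, ← hp1, hπ p hp]
    rw [← hp1, ← h2]
    simpa using hp
  -- the chain must leave I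
  have hex : ∃ n, x n ∉ I := by
    refine ⟨orderOf π - 1, ?_⟩
    have hm : 0 < orderOf π := orderOf_pos π
    intro hmem
    have hret : x (orderOf π - 1 + 1) = i0 := by
      rw [Nat.sub_add_cancel hm]
      simp [hx, pow_orderOf_eq_one]
    exact hi0J (Finset.mem_image.mpr ⟨_, hstep _ hmem, hret⟩)
  set k := Nat.find hex with hkdef
  have hk : x k ∉ I := Nat.find_spec hex
  have hklt : ∀ n < k, x n ∈ I := fun n hn => not_not.mp (Nat.find_min hex hn)
  have hk1 : 1 ≤ k := by
    rcases Nat.eq_zero_or_pos k with h0 | h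
    · exact absurd (h0 ▸ hk) (by rw [hx0]; exact fun hh => hh hi0I)
    · exact h
  have hretJ : ∀ d, 1 ≤ d → d ≤ k → x d = i0 → False := by
    intro d h1 h2 heq
    rcases eq_or_lt_of_le h2 with rfl | hlt
    · exact hk (heq ▸ hi0I)
    · have hd1 : d - 1 < k := lt_of_le_of_lt (Nat.sub_le d 1) hlt
      have := hstep (d - 1) (hklt _ hd1)
      rw [Nat.sub_add_cancel h1, heq] at this
      exact hi0J (Finset.mem_image.mpr ⟨_, this, rfl⟩)
  have xinj : ∀ a ≤ k, ∀ b ≤ k, x a = x b → a = b := by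
    have aux : ∀ a b, a ≤ b → b ≤ k → x a = x b → a = b := by
      intro a b hab hbk heq
      have hxb : x b = (π ^ a) (x (b - a)) := by
        have hba : a + (b - a) = b := by omega
        conv_lhs => rw [← hba]
        simp only [hx, pow_add, Equiv.Perm.mul_apply]
      have hxa : x a = (π ^ a) (x 0) := by rw [hx0]
      rw [hxa, hxb] at heq
      have h0 : x 0 = x (b - a) := (π ^ a).injective heq
      rcases Nat.eq_zero_or_pos (b - a) with h0' | hpos
      · omega
      · exact (hretJ (b - a) hpos (by omega) (by rw [← h0]; exact hx0)).elim
    intro a ha b hb heq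
    rcases le_total a b with h | h
    · exact aux a b h hb heq
    · exact (aux b a h ha heq.symm).symm
  set K := if Even k then k else k + 1 with hKdef
  have hKeven : Even K := by
    by_cases h : Even k
    · simpa [hKdef, h] using h
    · simp only [hKdef, if_neg h]
      exact Nat.even_add_one.mpr h
  have hkK : k ≤ K := by
    by_cases h : Even k <;> simp [hKdef, h]
  have hKk1 : K ≤ k + 1 := by
    by_cases h : Even k <;> simp [hKdef, h]
  set partner : ℕ → ℕ := fun n => if Even n then n + 1 else n - 1 with hpdef
  have hpartner_lt : ∀ n < K, partner n < K := by
    intro n hn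
    by_cases h : Even n
    · simp only [hpdef, if_pos h]
      rcases eq_or_lt_of_le (Nat.succ_le_of_lt hn) with he | hlt
      · exact absurd (he ▸ hKeven) (by simpa [Nat.even_add_one] using h)
      · exact hlt
    · simp only [hpdef, if_neg h]
      omega
  have hpartner_partner : ∀ n < K, partner (partner n) = n := by
    intro n _
    by_cases h : Even n
    · have h1 : ¬ Even (n + 1) := by simpa [Nat.even_add_one] using h
      simp [hpdef, h, h1]
    · have hn1 : 1 ≤ n := Nat.one_le_iff_ne_zero.mpr (fun h0 => h (h0 ▸ Even.zero))
      have h1 : Even (n - 1) := Nat.Odd.sub_odd (Nat.not_even_iff_odd.mp h) odd_one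
      simp only [hpdef]
      rw [if_neg h, if_pos h1, Nat.sub_add_cancel hn1]
  have hedge : ∀ n < K, G.Adj (x n) (x (partner n)) := by
    intro n hn
    by_cases h : Even n
    · have hn1 : n + 1 < K := by
        have := hpartner_lt n hn
        simpa [hpdef, if_pos h] using this
      have hnk' : n < k := by omega
      have := hP.1 _ (hstep n (hklt n hnk'))
      simpa [hpdef, if_pos h] using this
    · have hn1 : 1 ≤ n := Nat.one_le_iff_ne_zero.mpr (fun h0 => h (h0 ▸ Even.zero))
      have hn1k : n - 1 < k := by omega
      have := hP.1 _ (hstep (n - 1) (hklt _ hn1k))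
      rw [Nat.sub_add_cancel hn1] at this
      simp only [hpdef, if_neg h]
      exact this.symm
  set C : Finset (Fin N × Fin N) := (Finset.range k).image (fun n => (x n, x (n + 1))) with hCdef
  set Nw : Finset (Fin N × Fin N) := (Finset.range K).image (fun n => (x n, x (partner n))) with hNwdef
  set Q := (P \ C) ∪ Nw with hQdef
  have hCsub : C ⊆ P := by
    intro p hp
    obtain ⟨n, hn, rfl⟩ := Finset.mem_image.mp hp
    exact hstep n (hklt n (Finset.mem_range.mp hn))
  have hCcard : C.card = k := by
    rw [hCdef, Finset.card_image_of_injOn, Finset.card_range]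
    intro a ha b hb hab
    simp only [Finset.coe_range, Set.mem_Iio] at ha hb
    exact xinj a (le_of_lt ha) b (le_of_lt hb) (congrArg Prod.fst hab)
  have hNwcard : Nw.card = K := by
    rw [hNwdef, Finset.card_image_of_injOn, Finset.card_range]
    intro a ha b hb hab
    simp only [Finset.coe_range, Set.mem_Iio] at ha hb
    exact xinj a (by omega) b (by omega) (congrArg Prod.fst hab)
  set Xk := (Finset.range k).image x with hXkdef
  set XK := (Finset.range K).image x with hXKdef
  set Yk := (Finset.range k).image (fun n => x (n + 1)) with hYkdef
  have hXkcard : Xk.card = k := by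
    rw [hXkdef, Finset.card_image_of_injOn, Finset.card_range]
    intro a ha b hb hab
    simp only [Finset.coe_range, Set.mem_Iio] at ha hb
    exact xinj a (by omega) b (by omega) hab
  have hXKcard : XK.card = K := by
    rw [hXKdef, Finset.card_image_of_injOn, Finset.card_range]
    intro a ha b hb hab
    simp only [Finset.coe_range, Set.mem_Iio] at ha hb
    exact xinj a (by omega) b (by omega) hab
  have hYkcard : Yk.card = k := by
    rw [hYkdef, Finset.card_image_of_injOn, Finset.card_range]
    intro a ha b hb hab
    simp only [Finset.coe_range, Set.mem_Iio] at ha hb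
    have := xinj (a + 1) (by omega) (b + 1) (by omega) hab
    omega
  have hCfst : C.image Prod.fst = Xk := by
    rw [hCdef, Finset.image_image]; rfl
  have hCsnd : C.image Prod.snd = Yk := by
    rw [hCdef, Finset.image_image]; rfl
  have hNwfst : Nw.image Prod.fst = XK := by
    rw [hNwdef, Finset.image_image]; rfl
  have hNwsnd : Nw.image Prod.snd = XK := by
    rw [hNwdef, Finset.image_image]
    apply Finset.Subset.antisymm
    · intro y hy
      obtain ⟨n, hn, rfl⟩ := Finset.mem_image.mp hy
      exact Finset.mem_image.mpr ⟨partner n,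
        Finset.mem_range.mpr (hpartner_lt n (Finset.mem_range.mp hn)), rfl⟩
    · intro y hy
      obtain ⟨n, hn, rfl⟩ := Finset.mem_image.mp hy
      refine Finset.mem_image.mpr ⟨partner n,
        Finset.mem_range.mpr (hpartner_lt n (Finset.mem_range.mp hn)), ?_⟩
      show x (partner (partner n)) = x n
      rw [hpartner_partner n (Finset.mem_range.mp hn)]
  have hPCfst : (P \ C).image Prod.fst = I \ Xk := by
    rw [image_sdiff_of_injOn (injOn_fst hP) hCsub, hCfst, ← hI]
  have hPCsnd : (P \ C).image Prod.snd = J \ Yk := by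
    rw [image_sdiff_of_injOn (injOn_snd hP) hCsub, hCsnd, ← hJ]
  have hdisjPC : Disjoint (P \ C) Nw := by
    rw [Finset.disjoint_left]
    intro p hp hpNw
    obtain ⟨n, hn, rfl⟩ := Finset.mem_image.mp hpNw
    have hn' := Finset.mem_range.mp hn
    have h1 : x n ∈ I \ Xk := by
      rw [← hPCfst]; exact Finset.mem_image.mpr ⟨_, hp, rfl⟩
    obtain ⟨hxI, hxXk⟩ := Finset.mem_sdiff.mp h1
    rcases Nat.lt_or_ge n k with h | h
    · exact hxXk (Finset.mem_image.mpr ⟨n, Finset.mem_range.mpr h, rfl⟩)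
    · have hnk : n = k := by omega
      exact hk (hnk ▸ hxI)
  have hkt : k ≤ t := by
    rw [← hPc, ← hCcard]; exact Finset.card_le_card hCsub
  have hQcard : Q.card = t - k + K := by
    rw [hQdef, Finset.card_union_of_disjoint hdisjPC, Finset.card_sdiff_of_subset hCsub, hPc, hCcard,
      hNwcard]
  have hXkI : Xk ⊆ I := by
    intro v hv
    obtain ⟨n, hn, rfl⟩ := Finset.mem_image.mp hv
    exact hklt n (Finset.mem_range.mp hn)
  have hYkJ : Yk ⊆ J := by
    intro v hv
    obtain ⟨n, hn, rfl⟩ := Finset.mem_image.mp hv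
    exact Finset.mem_image.mpr ⟨_, hstep n (hklt n (Finset.mem_range.mp hn)), rfl⟩
  have hIcard : I.card = t := by rw [hI, hP.2.1, hPc]
  have hJcard : J.card = t := by rw [hJ, hP.2.2, hPc]
  have hQfst : Q.image Prod.fst = (I \ Xk) ∪ XK := by
    rw [hQdef, Finset.image_union, hPCfst, hNwfst]
  have hQsnd : Q.image Prod.snd = (J \ Yk) ∪ XK := by
    rw [hQdef, Finset.image_union, hPCsnd, hNwsnd]
  have hdisj2 : Disjoint (I \ Xk) XK := by
    rw [Finset.disjoint_left]
    intro v hv hvXK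
    obtain ⟨hvI, hvXk⟩ := Finset.mem_sdiff.mp hv
    obtain ⟨n, hn, rfl⟩ := Finset.mem_image.mp hvXK
    have hn' := Finset.mem_range.mp hn
    rcases Nat.lt_or_ge n k with h | h
    · exact hvXk (Finset.mem_image.mpr ⟨n, Finset.mem_range.mpr h, rfl⟩)
    · have hnk : n = k := by omega
      exact hk (hnk ▸ hvI)
  have hdisj3 : Disjoint (J \ Yk) XK := by
    rw [Finset.disjoint_left]
    intro v hv hvXK
    obtain ⟨hvJ, hvYk⟩ := Finset.mem_sdiff.mp hv
    obtain ⟨n, hn, rfl⟩ := Finset.mem_image.mp hvXK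
    have hn' := Finset.mem_range.mp hn
    rcases Nat.eq_zero_or_pos n with rfl | hpos
    · exact hi0J (hx0 ▸ hvJ)
    · refine hvYk (Finset.mem_image.mpr ⟨n - 1, Finset.mem_range.mpr (by omega), ?_⟩)
      show x (n - 1 + 1) = x n
      rw [Nat.sub_add_cancel hpos]
  have hQterm : IsTerm N G Q := by
    refine ⟨?_, ?_, ?_⟩
    · intro p hp
      rcases Finset.mem_union.mp hp with h | h
      · exact hP.1 p (Finset.mem_sdiff.mp h).1
      · obtain ⟨n, hn, rfl⟩ := Finset.mem_image.mp h
        exact hedge n (Finset.mem_range.mp hn)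
    · rw [hQfst, Finset.card_union_of_disjoint hdisj2, Finset.card_sdiff_of_subset hXkI, hIcard,
        hXkcard, hXKcard, hQcard]
    · rw [hQsnd, Finset.card_union_of_disjoint hdisj3, Finset.card_sdiff_of_subset hYkJ, hJcard,
        hYkcard, hXKcard, hQcard]
  have hEk : Even k := by
    by_contra hodd
    have hKval : K = k + 1 := by rw [hKdef, if_neg hodd]
    have h1 : Q.card = t + 1 := by omega
    have h2 := ht2 Q hQterm
    omega
  have hKval : K = k := by rw [hKdef, if_pos hEk]
  have hQt : Q.card = t := by omega
  refine ⟨Q, hQterm, hQt, ?_⟩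
  have hsub : Q.image Prod.fst \ Q.image Prod.snd ⊆ (I \ J).erase i0 := by
    intro v hv
    obtain ⟨hvf, hvs⟩ := Finset.mem_sdiff.mp hv
    rw [hQfst] at hvf
    rw [hQsnd] at hvs
    have hvXK : v ∉ XK := fun hh => hvs (Finset.mem_union_right _ hh)
    have hvJYk : v ∉ J \ Yk := fun hh => hvs (Finset.mem_union_left _ hh)
    have hvI : v ∈ I := by
      rcases Finset.mem_union.mp hvf with h | h
      · exact (Finset.mem_sdiff.mp h).1
      · exact absurd h hvXK
    have hi0XK : i0 ∈ XK := Finset.mem_image.mpr ⟨0, Finset.mem_range.mpr (by omega), hx0⟩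
    have hvne : v ≠ i0 := fun hh => hvXK (hh ▸ hi0XK)
    have hvJ : v ∉ J := by
      intro hvJ'
      have hvYk : v ∈ Yk := by
        by_contra hno
        exact hvJYk (Finset.mem_sdiff.mpr ⟨hvJ', hno⟩)
      obtain ⟨n, hn, rfl⟩ := Finset.mem_image.mp hvYk
      have hn' := Finset.mem_range.mp hn
      rcases Nat.lt_or_ge (n + 1) k with h | h
      · exact hvXK (Finset.mem_image.mpr ⟨n + 1, Finset.mem_range.mpr (by omega), rfl⟩)
      · have hnk : n + 1 = k := by omega
        exact hk (hnk ▸ hvI)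
    exact Finset.mem_erase.mpr ⟨hvne, Finset.mem_sdiff.mpr ⟨hvI, hvJ⟩⟩
  calc (Q.image Prod.fst \ Q.image Prod.snd).card
      ≤ ((I \ J).erase i0).card := Finset.card_le_card hsub
    _ < (I \ J).card := Finset.card_erase_lt_of_mem hi0


lemma exists_good {t : ℕ}
    (ht2 : ∀ Q : Finset (Fin N × Fin N), IsTerm N G Q → Q.card ≤ t) :
    ∀ (d : ℕ) (P : Finset (Fin N × Fin N)), IsTerm N G P → P.card = t →
      (P.image Prod.fst \ P.image Prod.snd).card ≤ d →
      ∃ Q : Finset (Fin N × Fin N), IsTerm N G Q ∧ Q.card = t ∧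
        Q.image Prod.fst = Q.image Prod.snd := by
  intro d
  induction d with
  | zero =>
    intro P hP hc hd
    have hempty : P.image Prod.fst \ P.image Prod.snd = ∅ :=
      Finset.card_eq_zero.mp (Nat.le_zero.mp hd)
    have hsub : P.image Prod.fst ⊆ P.image Prod.snd :=
      Finset.sdiff_eq_empty_iff_subset.mp hempty
    exact ⟨P, hP, hc, Finset.eq_of_subset_of_card_le hsub (by rw [hP.2.1, hP.2.2])⟩
  | succ d ih =>
    intro P hP hc hd
    rcases Finset.eq_empty_or_nonempty (P.image Prod.fst \ P.image Prod.snd) with he | hne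
    · have hsub : P.image Prod.fst ⊆ P.image Prod.snd :=
        Finset.sdiff_eq_empty_iff_subset.mp he
      exact ⟨P, hP, hc, Finset.eq_of_subset_of_card_le hsub (by rw [hP.2.1, hP.2.2])⟩
    · obtain ⟨i0, hi0⟩ := hne
      obtain ⟨Q, hQ, hQc, hQlt⟩ := chain_step ht2 hP hc hi0
      exact ih Q hQ hQc (by omega)

end MPAux

theorem mpPerm_eq_max_term_and_exists_term_with_eq_supports
    (N : ℕ) (G : SimpleGraph (Fin N)) [DecidableRel G.Adj] (t : ℕ)
    (ht : IsGreatest {n : ℕ | ∃ P : Finset (Fin N × Fin N),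
      IsTerm N G P ∧ P.card = n} t) :
    mpPerm N G = t ∧
      ∃ P : Finset (Fin N × Fin N), IsTerm N G P ∧ P.card = t ∧
        P.image Prod.fst = P.image Prod.snd := by
  have ht2 : ∀ Q : Finset (Fin N × Fin N), IsTerm N G Q → Q.card ≤ t :=
    fun Q hQ => ht.2 ⟨Q, hQ, rfl⟩
  obtain ⟨P, hP, hPc⟩ := ht.1
  constructor
  · exact le_antisymm (MPAux.mpPerm_le ht2) (hPc ▸ MPAux.le_mpPerm hP)
  · exact MPAux.exists_good ht2 _ P hP hPc le_rfl
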